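/- Let γ > 0, b > 0, p > 0, q_max > b + p/γ, and let b̂ ∈ [0, q_max] be the reported baseline. The maximizer of H(q) = G(q) - p·max(b̂, q) over q ∈ [0, q_max], where G(q) = -γ/2·q² + (γb + p)q for q ≤ b + p/γ and constant p²/(2γ) + γb²/2 + pb thereafter, is: q* = b if b̂ ≤ b; q* = b̂ if b < b̂ ≤ b + p/γ; and q* = b + p/γ if b̂ > b + p/γ. -/

import Mathlib

open Set

/-- maximizer of H(q) = G(q) - p·max(bhat, q) over [0, q_max], by cases on bhat. -/
theorem stmt2 (γ b p qmax bhat : ℝ) (hγ : 0 < γ) (hb : 0 < b) (hp : 0 < p)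
    (hqmax : b + p / γ < qmax) (hbhat : bhat ∈ Set.Icc (0:ℝ) qmax)
    (G : ℝ → ℝ)
    (hG : ∀ q, G q = if q ≤ b + p / γ then -γ/2 * q^2 + (γ*b + p) * q
                     else p^2/(2*γ) + γ*b^2/2 + p*b) :
    (bhat ≤ b → IsMaxOn (fun q => G q - p * max bhat q) (Set.Icc 0 qmax) b) ∧
    (b < bhat → bhat ≤ b + p/γ → IsMaxOn (fun q => G q - p * max bhat q) (Set.Icc 0 qmax) bhat) ∧
    (b + p/γ < bhat → IsMaxOn (fun q => G q - p * max bhat q) (Set.Icc 0 qmax) (b + p/γ)) := by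
  obtain ⟨t, ht, rfl⟩ : ∃ t, 0 < t ∧ p = γ * t :=
    ⟨p / γ, div_pos hp hγ, by field_simp⟩
  have ed : γ * t / γ = t := by field_simp
  have es : (γ * t)^2 / (2 * γ) = γ * t^2 / 2 := by field_simp
  rw [ed]
  simp only [ed, es] at hG
  obtain ⟨hb0, hb1⟩ := hbhat
  refine ⟨?_, ?_, ?_⟩
  · intro hle
    rw [isMaxOn_iff]
    intro x ⟨hx0, hx1⟩
    simp only [hG]
    rw [if_pos (by linarith : b ≤ b + t), max_eq_right hle]
    rcases le_total bhat x with h | h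
    · rw [max_eq_right h]
      split_ifs with hq
      · nlinarith [sq_nonneg (x - b)]
      · push_neg at hq
        nlinarith [mul_pos hγ (mul_pos ht (sub_pos.mpr hq)), mul_pos hγ (mul_pos ht ht)]
    · rw [max_eq_left h, if_pos (by linarith : x ≤ b + t)]
      nlinarith [sq_nonneg (x - b)]
  · intro h1 h2
    rw [isMaxOn_iff]
    intro x ⟨hx0, hx1⟩
    simp only [hG]
    rw [if_pos h2, max_self]
    rcases le_total bhat x with h | h
    · rw [max_eq_right h]
      split_ifs with hq
      · nlinarith [mul_nonneg (mul_nonneg hγ.le (sub_nonneg.mpr h))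
          (by linarith : (0:ℝ) ≤ x + bhat - 2*b)]
      · push_neg at hq
        nlinarith [mul_pos hγ (mul_pos ht (sub_pos.mpr hq)),
          mul_nonneg hγ.le (mul_nonneg (by linarith : (0:ℝ) ≤ t - (bhat - b))
            (by linarith : (0:ℝ) ≤ t + (bhat - b)))]
    · rw [max_eq_left h, if_pos (by linarith : x ≤ b + t)]
      nlinarith [mul_nonneg (mul_nonneg hγ.le (sub_nonneg.mpr h))
        (by linarith : (0:ℝ) ≤ 2*(b + t) - (bhat + x))]
  · intro h1
    rw [isMaxOn_iff]
    intro x ⟨hx0, hx1⟩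
    simp only [hG]
    rw [if_pos (le_refl (b + t)), max_eq_left h1.le]
    rcases le_total bhat x with h | h
    · rw [max_eq_right h]
      split_ifs with hq
      · nlinarith [mul_nonneg hγ.le (sq_nonneg (x - b - t)),
          mul_nonneg (mul_nonneg hγ.le ht.le) (sub_nonneg.mpr h)]
      · push_neg at hq
        nlinarith [mul_nonneg (mul_nonneg hγ.le ht.le) (sub_nonneg.mpr h)]
    · rw [max_eq_left h]
      split_ifs with hq
      · nlinarith [mul_nonneg hγ.le (sq_nonneg (x - b - t))]
      · nlinarith
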